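/- Let p ≥ 7 be a prime and let T be a sequence in Z_p with at least three nonzero terms. Then the sequence obtained from T by appending three zeros is a (Q_p,1)-weighted zero-sum sequence. -/

import Mathlib

def Qp (p : ℕ) : Set (ZMod p) := {x | ∃ u : (ZMod p)ˣ, (u : ZMod p) ^ 2 = x}

def Np (p : ℕ) : Set (ZMod p) := {x | IsUnit x ∧ x ∉ Qp p}

section aux

open scoped Pointwise

variable {p : ℕ} [Fact p.Prime]

/-- The quadratic residues as a Finset. -/
noncomputable def QF (p : ℕ) [Fact p.Prime] : Finset (ZMod p) :=
  Finset.univ.image (fun u : (ZMod p)ˣ => (u : ZMod p) ^ 2)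

lemma memQF {s : ZMod p} : s ∈ QF p ↔ s ∈ Qp p := by
  simp [QF, Qp]

lemma two_mul_card_QF (hp : 7 ≤ p) : 2 * (QF p).card = p - 1 := by
  classical
  have hodd : (p : ℕ) ≠ 2 := by omega
  have hcard : Fintype.card (ZMod p)ˣ = p - 1 := by
    rw [ZMod.card_units_eq_totient p, Nat.totient_prime (Fact.out : p.Prime)]
  have key := Finset.card_eq_sum_card_fiberwise
    (f := fun u : (ZMod p)ˣ => (u : ZMod p) ^ 2) (s := Finset.univ) (t := QF p)
    (fun u _ => Finset.mem_image_of_mem _ (Finset.mem_univ u))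
  rw [Finset.card_univ, hcard] at key
  have hfib : ∀ b ∈ QF p,
      (Finset.filter (fun u : (ZMod p)ˣ => (u : ZMod p) ^ 2 = b) Finset.univ).card = 2 := by
    intro b hb
    obtain ⟨v, -, hv⟩ := Finset.mem_image.mp hb
    have hset : (Finset.filter (fun u : (ZMod p)ˣ => (u : ZMod p) ^ 2 = b) Finset.univ)
        = {v, -v} := by
      ext u
      simp only [Finset.mem_filter, Finset.mem_univ, true_and, Finset.mem_insert,
        Finset.mem_singleton, ← hv]
      constructor
      · intro h2
        have := (Commute.all ((u : ZMod p)) (v : ZMod p)).sq_eq_sq_iff_eq_or_eq_neg.mp h2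
        rcases this with h3 | h3
        · left; exact Units.ext h3
        · right; apply Units.ext; simpa using h3
      · rintro (rfl | rfl) <;> simp [neg_pow]
    rw [hset, Finset.card_insert_of_notMem, Finset.card_singleton]
    simp only [Finset.mem_singleton]
    intro hvv
    have h1 : (v : ZMod p) = -(v : ZMod p) := by
      conv_lhs => rw [hvv]
      simp
    have h2 : (2 : ZMod p) * (v : ZMod p) = 0 := by linear_combination h1
    have h2' : (2 : ZMod p) ≠ 0 := by
      have : ((2 : ℕ) : ZMod p) ≠ 0 := by
        rw [Ne, ZMod.natCast_eq_zero_iff]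
        exact fun hd => by
          have := Nat.le_of_dvd (by norm_num) hd; omega
      simpa using this
    rcases mul_eq_zero.mp h2 with h | h
    · exact h2' h
    · exact v.ne_zero h
  rw [Finset.sum_congr rfl hfib, Finset.sum_const, smul_eq_mul, mul_comm] at key
  omega

lemma one_mem_QF : (1 : ZMod p) ∈ QF p := by
  refine Finset.mem_image.mpr ⟨1, Finset.mem_univ _, by simp⟩

lemma key (hp : 7 ≤ p) (c₁ c₂ c₃ : ZMod p) (h₁ : c₁ ≠ 0) (h₂ : c₂ ≠ 0) (h₃ : c₃ ≠ 0)
    (t : ZMod p) : ∃ a₁ a₂ a₃ : ZMod p, a₁ ∈ Qp p ∧ a₂ ∈ Qp p ∧ a₃ ∈ Qp p ∧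
      a₁ * c₁ + a₂ * c₂ + a₃ * c₃ = t := by
  classical
  have hpp : p.Prime := Fact.out
  have hq := two_mul_card_QF (p := p) hp
  set q := (QF p).card with hqdef
  set A : ZMod p → Finset (ZMod p) := fun c => (QF p).image (· * c) with hA
  have hAcard : ∀ c : ZMod p, c ≠ 0 → (A c).card = q := by
    intro c hc
    exact Finset.card_image_of_injective _ (mul_left_injective₀ hc)
  have hAne : ∀ c : ZMod p, (A c).Nonempty :=
    fun c => ⟨1 * c, Finset.mem_image_of_mem _ one_mem_QF⟩
  have hcd1 := ZMod.cauchy_davenport hpp (hAne c₁) (hAne c₂)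
  have hcd2 := ZMod.cauchy_davenport hpp (Finset.Nonempty.add (hAne c₁) (hAne c₂)) (hAne c₃)
  rw [hAcard c₁ h₁, hAcard c₂ h₂] at hcd1
  rw [hAcard c₃ h₃] at hcd2
  have hple : p ≤ (A c₁ + A c₂ + A c₃).card := by omega
  have huniv : A c₁ + A c₂ + A c₃ = Finset.univ := by
    apply Finset.eq_univ_of_card
    have hle : (A c₁ + A c₂ + A c₃).card ≤ Fintype.card (ZMod p) := Finset.card_le_univ _
    rw [ZMod.card p] at hle
    rw [ZMod.card p]
    omega
  have ht : t ∈ A c₁ + A c₂ + A c₃ := huniv ▸ Finset.mem_univ t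
  rw [Finset.mem_add] at ht
  obtain ⟨y, hy, z, hz, hyz⟩ := ht
  rw [Finset.mem_add] at hy
  obtain ⟨y₁, hy₁, y₂, hy₂, hy12⟩ := hy
  obtain ⟨a₁, ha₁, rfl⟩ := Finset.mem_image.mp hy₁
  obtain ⟨a₂, ha₂, rfl⟩ := Finset.mem_image.mp hy₂
  obtain ⟨a₃, ha₃, rfl⟩ := Finset.mem_image.mp hz
  exact ⟨a₁, a₂, a₃, memQF.mp ha₁, memQF.mp ha₂, memQF.mp ha₃, by
    rw [← hyz, ← hy12]⟩

end aux

theorem stmt_4 (p : ℕ) [Fact p.Prime] (hp : 7 ≤ p) (k : ℕ) (x : Fin k → ZMod p)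
    (h : 3 ≤ (Finset.univ.filter (fun i => x i ≠ 0)).card) :
    ∃ a : Fin k → ZMod p, ∃ b₁ b₂ b₃ : ZMod p,
      (∀ i, a i ∈ Qp p) ∧ b₁ ∈ Qp p ∧ b₂ ∈ Qp p ∧ b₃ ∈ Qp p ∧
      (∑ i, a i * x i) + b₁ * 0 + b₂ * 0 + b₃ * 0 = 0 ∧
      (∑ i, a i) + b₁ + b₂ + b₃ = 0 := by
  classical
  obtain ⟨t, hts, htc⟩ := Finset.exists_subset_card_eq h
  obtain ⟨i, j, l, hij, hil, hjl, rfl⟩ := Finset.card_eq_three.mp htc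
  have hxi : x i ≠ 0 := (Finset.mem_filter.mp (hts (by simp))).2
  have hxj : x j ≠ 0 := (Finset.mem_filter.mp (hts (by simp))).2
  have hxl : x l ≠ 0 := (Finset.mem_filter.mp (hts (by simp))).2
  set s : Finset (Fin k) := {i, j, l} with hs
  set c : ZMod p := ∑ m ∈ sᶜ, x m with hc
  obtain ⟨a₁, a₂, a₃, ha₁, ha₂, ha₃, hsum⟩ := key hp (x i) (x j) (x l) hxi hxj hxl (-c)
  set a : Fin k → ZMod p :=
    fun m => if m = i then a₁ else if m = j then a₂ else if m = l then a₃ else 1 with ha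
  have hai : a i = a₁ := by simp [ha]
  have haj : a j = a₂ := by simp [ha, Ne.symm hij]
  have hal : a l = a₃ := by simp [ha, Ne.symm hil, Ne.symm hjl]
  have haQ : ∀ m, a m ∈ Qp p := by
    intro m
    rw [ha]
    dsimp only
    split_ifs with h1 h2 h3
    · exact ha₁
    · exact ha₂
    · exact ha₃
    · exact ⟨1, by simp⟩
  have hcompl : ∀ m ∈ sᶜ, a m = 1 := by
    intro m hm
    rw [Finset.mem_compl, hs] at hm
    simp only [Finset.mem_insert, Finset.mem_singleton, not_or] at hm
    simp [ha, hm.1, hm.2.1, hm.2.2]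
  have hsum_s : ∑ m ∈ s, a m * x m = a₁ * x i + a₂ * x j + a₃ * x l := by
    rw [hs, Finset.sum_insert (by simp [hij, hil]),
      Finset.sum_insert (by simp [hjl]), Finset.sum_singleton, hai, haj, hal, add_assoc]
  have hsum_c : ∑ m ∈ sᶜ, a m * x m = c := by
    rw [hc]
    exact Finset.sum_congr rfl fun m hm => by rw [hcompl m hm, one_mul]
  have htotal : ∑ m, a m * x m = 0 := by
    rw [← Finset.sum_add_sum_compl s, hsum_s, hsum_c, hsum]
    ring
  obtain ⟨b₁, b₂, b₃, hb₁, hb₂, hb₃, hbsum⟩ :=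
    key hp 1 1 1 one_ne_zero one_ne_zero one_ne_zero (-(∑ m, a m))
  refine ⟨a, b₁, b₂, b₃, haQ, hb₁, hb₂, hb₃, by simp [htotal], ?_⟩
  simp only [mul_one] at hbsum
  linear_combination hbsum
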